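/- Let H be a real Hilbert space, U ⊆ H a set containing at least two points, R an operator defined on U mapping into H, Y ⊆ H a set containing at least two points with R(U) ⊆ Y, and T an operator defined on Y mapping into H. Then SRG_U(T ∘ R) ⊆ (SRG_Y(T)⁺ · SRG_U(R)) ∩ (SRG_Y(T) · SRG_U(R)⁺) ∩ (SRG_Y(T)⁻ · SRG_U(R)) ∩ (SRG_Y(T) · SRG_U(R)⁻), where C^± := ∪_{z∈C} Arc^±(z,z̄) denote the right- and left-arc completions and the products are Minkowski products in ℂ. -/

import Mathlib

open ComplexConjugate
open scoped RealInnerProductSpace Pointwise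

/-- The point `(‖Δy‖/‖Δu‖)·e^{iθ}` with `θ = arccos(⟨Δu,Δy⟩/(‖Δu‖‖Δy‖)) ∈ [0,π]`
contributed to the SRG by a pair of increments `Δu`, `Δy` (equal to `0` when `Δy = 0`). -/
noncomputable def srgPoint {H : Type*} [NormedAddCommGroup H] [InnerProductSpace ℝ H]
    (du dy : H) : ℂ :=
  ((‖dy‖ / ‖du‖ : ℝ) : ℂ) *
    Complex.exp (Complex.I * ((Real.arccos (⟪du, dy⟫ / (‖du‖ * ‖dy‖)) : ℝ) : ℂ))

/-- The Scaled Relative Graph of an operator `R` on a real Hilbert space over a set `U` of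
inputs; both signs of the angle are included (via complex conjugation). -/
noncomputable def SRG {H : Type*} [NormedAddCommGroup H] [InnerProductSpace ℝ H]
    (R : H → H) (U : Set H) : Set ℂ :=
  { z | ∃ u₁ ∈ U, ∃ u₂ ∈ U, u₁ ≠ u₂ ∧
      (z = srgPoint (u₁ - u₂) (R u₁ - R u₂) ∨
        z = conj (srgPoint (u₁ - u₂) (R u₁ - R u₂))) }

/-- The Scaled Graph of an operator `R` at the particular input `us`, over a set `U` of inputs. -/
noncomputable def SG {H : Type*} [NormedAddCommGroup H] [InnerProductSpace ℝ H]
    (R : H → H) (U : Set H) (us : H) : Set ℂ :=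
  { z | ∃ u ∈ U, u ≠ us ∧
      (z = srgPoint (u - us) (R u - R us) ∨
        z = conj (srgPoint (u - us) (R u - R us))) }

/-- A set `C ⊆ ℂ` satisfies the chord property if for every `z ∈ C` the segment `[z, z̄]`
is contained in `C`. -/
def ChordProperty (C : Set ℂ) : Prop :=
  ∀ z ∈ C, ∀ α ∈ Set.Icc (0 : ℝ) 1, (α : ℂ) * z + ((1 - α : ℝ) : ℂ) * conj z ∈ C

/-- The right-hand arc `Arc⁺(z, z̄) = { r e^{i(1−2α)φ} : α ∈ [0,1] }`, where `z = r e^{iφ}`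
with `φ = arg z ∈ (−π, π]`. -/
noncomputable def arcPlus (z : ℂ) : Set ℂ :=
  { w | ∃ α ∈ Set.Icc (0 : ℝ) 1,
      w = ((‖z‖ : ℝ) : ℂ) *
        Complex.exp (Complex.I * (((1 - 2 * α) * Complex.arg z : ℝ) : ℂ)) }

/-- The left-hand arc `Arc⁻(z, z̄) = −Arc⁺(−z, −z̄)`. -/
noncomputable def arcMinus (z : ℂ) : Set ℂ := (fun w => -w) '' arcPlus (-z)

/-- `C` satisfies the right-arc property if `Arc⁺(z,z̄) ⊆ C` for all `z ∈ C`. -/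
def RightArcProperty (C : Set ℂ) : Prop := ∀ z ∈ C, arcPlus z ⊆ C

/-- `C` satisfies the left-arc property if `Arc⁻(z,z̄) ⊆ C` for all `z ∈ C`. -/
def LeftArcProperty (C : Set ℂ) : Prop := ∀ z ∈ C, arcMinus z ⊆ C

/-- `C` satisfies an arc property if it satisfies the left-arc or the right-arc property. -/
def ArcProperty (C : Set ℂ) : Prop := LeftArcProperty C ∨ RightArcProperty C

/-- The right-arc completion `C⁺ = ⋃_{z ∈ C} Arc⁺(z, z̄)`. -/
noncomputable def arcPlusCompletion (C : Set ℂ) : Set ℂ := ⋃ z ∈ C, arcPlus z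

/-- The left-arc completion `C⁻ = ⋃_{z ∈ C} Arc⁻(z, z̄)`. -/
noncomputable def arcMinusCompletion (C : Set ℂ) : Set ℂ := ⋃ z ∈ C, arcMinus z

/-! ### Auxiliary lemmas -/

section Aux

variable {H : Type*} [NormedAddCommGroup H] [InnerProductSpace ℝ H]

lemma key_inner' {u v w : H} (hu : ‖u‖ = 1) (hv : ‖v‖ = 1) (hw : ‖w‖ = 1) :
    ⟪u, v⟫ * ⟪v, w⟫ - Real.sqrt (1 - ⟪u, v⟫ ^ 2) * Real.sqrt (1 - ⟪v, w⟫ ^ 2) ≤ ⟪u, w⟫ := by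
  have hvv : ⟪v, v⟫ = (1 : ℝ) := by
    rw [real_inner_self_eq_norm_sq, hv]; norm_num
  have huu : ⟪u, u⟫ = (1 : ℝ) := by
    rw [real_inner_self_eq_norm_sq, hu]; norm_num
  have hww : ⟪w, w⟫ = (1 : ℝ) := by
    rw [real_inner_self_eq_norm_sq, hw]; norm_num
  have h1 : ⟪u - ⟪u, v⟫ • v, w - ⟪v, w⟫ • v⟫ = ⟪u, w⟫ - ⟪u, v⟫ * ⟪v, w⟫ := by
    simp only [inner_sub_left, inner_sub_right, real_inner_smul_left, real_inner_smul_right,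
      hvv]
    rw [real_inner_comm v u]
    ring
  have hn1 : ‖u - ⟪u, v⟫ • v‖ = Real.sqrt (1 - ⟪u, v⟫ ^ 2) := by
    rw [← Real.sqrt_sq (norm_nonneg _)]
    congr 1
    rw [← real_inner_self_eq_norm_sq]
    simp only [inner_sub_left, inner_sub_right, real_inner_smul_left, real_inner_smul_right,
      hvv, huu]
    rw [real_inner_comm v u]
    ring
  have hn2 : ‖w - ⟪v, w⟫ • v‖ = Real.sqrt (1 - ⟪v, w⟫ ^ 2) := by
    rw [← Real.sqrt_sq (norm_nonneg _)]
    congr 1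
    rw [← real_inner_self_eq_norm_sq]
    simp only [inner_sub_left, inner_sub_right, real_inner_smul_left, real_inner_smul_right,
      hvv, hww]
    rw [real_inner_comm v w]
    ring
  have h2 : |⟪u, w⟫ - ⟪u, v⟫ * ⟪v, w⟫|
      ≤ Real.sqrt (1 - ⟪u, v⟫ ^ 2) * Real.sqrt (1 - ⟪v, w⟫ ^ 2) := by
    rw [← h1, ← hn1, ← hn2]; exact abs_real_inner_le_norm _ _
  linarith [(abs_le.mp h2).1]

open InnerProductGeometry in
/-- Triangle inequality for the unoriented angle. -/
lemma angle_triangle' {x y z : H} (hx : x ≠ 0) (hy : y ≠ 0) (hz : z ≠ 0) :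
    angle x z ≤ angle x y + angle y z := by
  rcases le_or_gt (angle x y + angle y z) Real.pi with hs | hs
  swap
  · linarith [angle_le_pi x z]
  set u : H := (‖x‖ : ℝ)⁻¹ • x with hu'
  set v : H := (‖y‖ : ℝ)⁻¹ • y with hv'
  set w : H := (‖z‖ : ℝ)⁻¹ • z with hw'
  have hu : ‖u‖ = 1 := norm_smul_inv_norm (𝕜 := ℝ) hx
  have hv : ‖v‖ = 1 := norm_smul_inv_norm (𝕜 := ℝ) hy
  have hw : ‖w‖ = 1 := norm_smul_inv_norm (𝕜 := ℝ) hz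
  have hxpos : (0:ℝ) < ‖x‖⁻¹ := inv_pos.mpr (norm_pos_iff.mpr hx)
  have hypos : (0:ℝ) < ‖y‖⁻¹ := inv_pos.mpr (norm_pos_iff.mpr hy)
  have hzpos : (0:ℝ) < ‖z‖⁻¹ := inv_pos.mpr (norm_pos_iff.mpr hz)
  have e1 : angle u v = angle x y := by
    rw [hu', hv', angle_smul_left_of_pos _ _ hxpos, angle_smul_right_of_pos _ _ hypos]
  have e2 : angle v w = angle y z := by
    rw [hv', hw', angle_smul_left_of_pos _ _ hypos, angle_smul_right_of_pos _ _ hzpos]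
  have e3 : angle u w = angle x z := by
    rw [hu', hw', angle_smul_left_of_pos _ _ hxpos, angle_smul_right_of_pos _ _ hzpos]
  have cuv : Real.cos (angle u v) = ⟪u, v⟫ := by
    rw [cos_angle, hu, hv]; norm_num
  have cvw : Real.cos (angle v w) = ⟪v, w⟫ := by
    rw [cos_angle, hv, hw]; norm_num
  have cuw : Real.cos (angle u w) = ⟪u, w⟫ := by
    rw [cos_angle, hu, hw]; norm_num
  have hkey := key_inner' hu hv hw
  have hcos : Real.cos (angle x y + angle y z) ≤ Real.cos (angle x z) := by
    rw [Real.cos_add,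
      Real.sin_eq_sqrt_one_sub_cos_sq (angle_nonneg x y) (angle_le_pi x y),
      Real.sin_eq_sqrt_one_sub_cos_sq (angle_nonneg y z) (angle_le_pi y z),
      ← e1, ← e2, ← e3, cuv, cvw, cuw]
    exact hkey
  by_contra hcon
  push_neg at hcon
  have := Real.cos_lt_cos_of_nonneg_of_le_pi
    (add_nonneg (angle_nonneg x y) (angle_nonneg y z)) (angle_le_pi x z) hcon
  linarith

lemma srgPoint_def (du dy : H) :
    srgPoint du dy = ((‖dy‖ / ‖du‖ : ℝ) : ℂ) *
      Complex.exp (Complex.I * ((InnerProductGeometry.angle du dy : ℝ) : ℂ)) := rfl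

lemma srgPoint_zero (du : H) : srgPoint du (0 : H) = 0 := by
  rw [srgPoint_def]
  norm_num

end Aux

section CAux

lemma abs_coe_mul_exp {r : ℝ} (hr : 0 ≤ r) (φ : ℝ) :
    ‖(r : ℂ) * Complex.exp (Complex.I * (φ : ℂ))‖ = r := by
  rw [norm_mul, Complex.norm_real, mul_comm Complex.I, Complex.norm_exp_ofReal_mul_I,
    mul_one, Real.norm_eq_abs, _root_.abs_of_nonneg hr]

lemma arg_coe_mul_exp {r φ : ℝ} (hr : 0 < r) (h1 : -Real.pi < φ) (h2 : φ ≤ Real.pi) :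
    Complex.arg ((r : ℂ) * Complex.exp (Complex.I * (φ : ℂ))) = φ := by
  rw [mul_comm Complex.I, Complex.exp_mul_I]
  exact Complex.arg_mul_cos_add_sin_mul_I hr ⟨h1, h2⟩

lemma exp_I_sub_pi (β : ℝ) :
    Complex.exp (Complex.I * ((β - Real.pi : ℝ) : ℂ)) =
      -Complex.exp (Complex.I * (β : ℂ)) := by
  push_cast
  rw [show Complex.I * ((β : ℂ) - (Real.pi : ℂ)) =
      Complex.I * β + -((Real.pi : ℂ) * Complex.I) by ring, Complex.exp_add,
    Complex.exp_neg, Complex.exp_pi_mul_I]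
  norm_num

lemma conj_coe_mul_exp (r φ : ℝ) :
    conj ((r : ℂ) * Complex.exp (Complex.I * (φ : ℂ))) =
      (r : ℂ) * Complex.exp (Complex.I * ((-φ : ℝ) : ℂ)) := by
  rw [map_mul, Complex.conj_ofReal, ← Complex.exp_conj, map_mul, Complex.conj_I,
    Complex.conj_ofReal]
  push_cast
  ring_nf

lemma mem_arcPlus_of (w : ℂ) {β : ℝ} (h : |β| ≤ |w.arg|) :
    ((‖w‖ : ℝ) : ℂ) * Complex.exp (Complex.I * (β : ℂ)) ∈ arcPlus w := by
  by_cases h0 : w.arg = 0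
  · have hβ : β = 0 := by rw [h0] at h; simpa using h
    exact ⟨0, ⟨le_refl _, zero_le_one⟩, by rw [hβ, h0]; norm_num⟩
  · refine ⟨(1 - β / w.arg) / 2, ⟨?_, ?_⟩, ?_⟩
    · have : |β / w.arg| ≤ 1 := by
        rw [abs_div]
        exact div_le_one_of_le₀ h (abs_nonneg _)
      linarith [(abs_le.mp this).2]
    · have : |β / w.arg| ≤ 1 := by
        rw [abs_div]
        exact div_le_one_of_le₀ h (abs_nonneg _)
      linarith [(abs_le.mp this).1]
    · have hreal : ((1:ℝ) - 2 * ((1 - β / w.arg) / 2)) * w.arg = β := by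
        field_simp
        ring
      rw [hreal]

lemma self_mem_arcPlus (z : ℂ) : z ∈ arcPlus z := by
  refine ⟨0, ⟨le_refl _, zero_le_one⟩, ?_⟩
  rw [show ((1 : ℝ) - 2 * 0) * z.arg = z.arg by ring, mul_comm Complex.I]
  exact (Complex.norm_mul_exp_arg_mul_I z).symm

lemma self_mem_arcMinus (z : ℂ) : z ∈ arcMinus z :=
  ⟨-z, self_mem_arcPlus (-z), neg_neg z⟩

lemma conj_mem_arcPlus {w x : ℂ} (hx : x ∈ arcPlus w) : conj x ∈ arcPlus w := by
  obtain ⟨α, hα, rfl⟩ := hx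
  refine ⟨1 - α, ⟨by linarith [hα.2], by linarith [hα.1]⟩, ?_⟩
  rw [conj_coe_mul_exp]
  congr 2
  push_cast
  ring

lemma conj_mem_arcMinus {w x : ℂ} (hx : x ∈ arcMinus w) : conj x ∈ arcMinus w := by
  obtain ⟨y, hy, rfl⟩ := hx
  exact ⟨conj y, conj_mem_arcPlus hy, (map_neg conj y).symm⟩

lemma mem_arcMinus_of (w : ℂ) {β : ℝ} (h : |β - Real.pi| ≤ |(-w).arg|) :
    ((‖w‖ : ℝ) : ℂ) * Complex.exp (Complex.I * (β : ℂ)) ∈ arcMinus w := by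
  refine ⟨((‖-w‖ : ℝ) : ℂ) * Complex.exp (Complex.I * ((β - Real.pi : ℝ) : ℂ)),
    mem_arcPlus_of (-w) h, ?_⟩
  rw [exp_I_sub_pi, norm_neg]
  ring

lemma abs_arg_neg_coe_mul_exp {r φ : ℝ} (hr : 0 < r) (h0 : 0 ≤ φ) (hπ : φ ≤ Real.pi) :
    |(-((r : ℂ) * Complex.exp (Complex.I * (φ : ℂ)))).arg| = Real.pi - φ := by
  have hneg : -((r : ℂ) * Complex.exp (Complex.I * (φ : ℂ)))
      = (r : ℂ) * Complex.exp (Complex.I * ((φ - Real.pi : ℝ) : ℂ)) := by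
    rw [exp_I_sub_pi]; ring
  rcases eq_or_lt_of_le h0 with h0' | h0'
  · have hφ : φ = 0 := h0'.symm
    subst hφ
    have : -((r : ℂ) * Complex.exp (Complex.I * ((0:ℝ) : ℂ))) = (((-r : ℝ)) : ℂ) := by
      push_cast
      simp
    rw [this, Complex.arg_ofReal_of_neg (by linarith), _root_.abs_of_nonneg Real.pi_pos.le]
    ring
  · rw [hneg, arg_coe_mul_exp hr (by linarith) (by linarith [Real.pi_pos]),
      abs_of_nonpos (by linarith)]
    ring

lemma factor_eq {r₁ r₂ r : ℝ} {a b c : ℝ} (hr : r = r₁ * r₂) (hc : c = a + b) :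
    ((r : ℂ)) * Complex.exp (Complex.I * (c : ℂ)) =
      ((r₁ : ℂ) * Complex.exp (Complex.I * (a : ℂ))) *
        ((r₂ : ℂ) * Complex.exp (Complex.I * (b : ℂ))) := by
  subst hr hc
  push_cast
  rw [mul_add, Complex.exp_add]
  ring

lemma conj_mem_SRG {H : Type*} [NormedAddCommGroup H] [InnerProductSpace ℝ H]
    {R : H → H} {U : Set H} {x : ℂ} (hx : x ∈ SRG R U) : conj x ∈ SRG R U := by
  obtain ⟨u₁, h₁, u₂, h₂, hne, h | h⟩ := hx
  · exact ⟨u₁, h₁, u₂, h₂, hne, Or.inr (by rw [h])⟩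
  · exact ⟨u₁, h₁, u₂, h₂, hne, Or.inl (by rw [h]; simp)⟩

lemma conj_mem_arcPlusCompletion {C : Set ℂ} {x : ℂ} (hx : x ∈ arcPlusCompletion C) :
    conj x ∈ arcPlusCompletion C := by
  obtain ⟨s, ⟨z, rfl⟩, hs⟩ := hx
  obtain ⟨t, ⟨hz, rfl⟩, hx⟩ := hs
  exact Set.mem_biUnion hz (conj_mem_arcPlus hx)

lemma conj_mem_arcMinusCompletion {C : Set ℂ} {x : ℂ} (hx : x ∈ arcMinusCompletion C) :
    conj x ∈ arcMinusCompletion C := by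
  obtain ⟨s, ⟨z, rfl⟩, hs⟩ := hx
  obtain ⟨t, ⟨hz, rfl⟩, hx⟩ := hs
  exact Set.mem_biUnion hz (conj_mem_arcMinus hx)

lemma mem_mul_of {S S' : Set ℂ} (hS : ∀ x ∈ S, conj x ∈ S) (hS' : ∀ x ∈ S', conj x ∈ S')
    {z A B : ℂ} (hz : z = A * B ∨ z = conj (A * B)) (hA : A ∈ S) (hB : B ∈ S') :
    z ∈ S * S' := by
  rcases hz with rfl | rfl
  · exact Set.mul_mem_mul hA hB
  · rw [map_mul]
    exact Set.mul_mem_mul (hS A hA) (hS' B hB)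

end CAux

/-- improved arc completion bound for compositions: if `U`, `Y` each contain at
least two points and `R(U) ⊆ Y`, then `SRG_U(T∘R)` is contained in the intersection
`(SRG_Y(T)⁺·SRG_U(R)) ∩ (SRG_Y(T)·SRG_U(R)⁺) ∩ (SRG_Y(T)⁻·SRG_U(R)) ∩ (SRG_Y(T)·SRG_U(R)⁻)`. -/
theorem stmt11 {H : Type*} [NormedAddCommGroup H] [InnerProductSpace ℝ H]
    (R T : H → H) (U Y : Set H)
    (hU : ∃ u ∈ U, ∃ v ∈ U, u ≠ v) (hY : ∃ u ∈ Y, ∃ v ∈ Y, u ≠ v)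
    (hmaps : Set.MapsTo R U Y) :
    SRG (T ∘ R) U ⊆
      (arcPlusCompletion (SRG T Y) * SRG R U) ∩ (SRG T Y * arcPlusCompletion (SRG R U)) ∩
      (arcMinusCompletion (SRG T Y) * SRG R U) ∩ (SRG T Y * arcMinusCompletion (SRG R U)) := by
  intro z hz
  obtain ⟨u₁, hu₁, u₂, hu₂, hne, hz⟩ := hz
  have hcomp : (T ∘ R) u₁ - (T ∘ R) u₂ = T (R u₁) - T (R u₂) := rfl
  rw [hcomp] at hz
  set du : H := u₁ - u₂ with hdu'
  set dy : H := R u₁ - R u₂ with hdy'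
  set dz : H := T (R u₁) - T (R u₂) with hdz'
  have hdu : du ≠ 0 := sub_ne_zero.mpr hne
  -- conj-closedness of the four pairs of sets
  have hSR : ∀ x ∈ SRG R U, conj x ∈ SRG R U := fun x hx => conj_mem_SRG hx
  have hST : ∀ x ∈ SRG T Y, conj x ∈ SRG T Y := fun x hx => conj_mem_SRG hx
  have hPT : ∀ x ∈ arcPlusCompletion (SRG T Y), conj x ∈ arcPlusCompletion (SRG T Y) :=
    fun x hx => conj_mem_arcPlusCompletion hx
  have hPR : ∀ x ∈ arcPlusCompletion (SRG R U), conj x ∈ arcPlusCompletion (SRG R U) :=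
    fun x hx => conj_mem_arcPlusCompletion hx
  have hMT : ∀ x ∈ arcMinusCompletion (SRG T Y), conj x ∈ arcMinusCompletion (SRG T Y) :=
    fun x hx => conj_mem_arcMinusCompletion hx
  have hMR : ∀ x ∈ arcMinusCompletion (SRG R U), conj x ∈ arcMinusCompletion (SRG R U) :=
    fun x hx => conj_mem_arcMinusCompletion hx
  have hzR_mem : srgPoint du dy ∈ SRG R U := ⟨u₁, hu₁, u₂, hu₂, hne, Or.inl rfl⟩
  by_cases hdy : dy = 0
  · -- degenerate case: R u₁ = R u₂, hence z = 0
    have hRu : R u₁ = R u₂ := by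
      have := sub_eq_zero.mp (by rw [← hdy'] ; exact hdy)
      exact this
    have hdz : dz = 0 := by rw [hdz', hRu, sub_self]
    have hz0 : z = 0 := by
      rcases hz with rfl | rfl
      · rw [hdz, srgPoint_zero]
      · rw [hdz, srgPoint_zero, map_zero]
    have hR0 : (0 : ℂ) ∈ SRG R U := by
      have : srgPoint du dy = 0 := by rw [hdy, srgPoint_zero]
      exact this ▸ hzR_mem
    obtain ⟨y₁, hy₁, y₂, hy₂, hyne⟩ := hY
    set t : ℂ := srgPoint (y₁ - y₂) (T y₁ - T y₂) with ht'
    have htT : t ∈ SRG T Y := ⟨y₁, hy₁, y₂, hy₂, hyne, Or.inl rfl⟩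
    have h1 : z ∈ arcPlusCompletion (SRG T Y) * SRG R U := by
      have := Set.mul_mem_mul (Set.mem_biUnion htT (self_mem_arcPlus t)) hR0
      rwa [mul_zero, ← hz0] at this
    have h2 : z ∈ SRG T Y * arcPlusCompletion (SRG R U) := by
      have := Set.mul_mem_mul htT (Set.mem_biUnion hR0 (self_mem_arcPlus 0))
      rwa [mul_zero, ← hz0] at this
    have h3 : z ∈ arcMinusCompletion (SRG T Y) * SRG R U := by
      have := Set.mul_mem_mul (Set.mem_biUnion htT (self_mem_arcMinus t)) hR0
      rwa [mul_zero, ← hz0] at this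
    have h4 : z ∈ SRG T Y * arcMinusCompletion (SRG R U) := by
      have := Set.mul_mem_mul htT (Set.mem_biUnion hR0 (self_mem_arcMinus 0))
      rwa [mul_zero, ← hz0] at this
    exact ⟨⟨⟨h1, h2⟩, h3⟩, h4⟩
  · -- R u₁ ≠ R u₂
    have hRne : R u₁ ≠ R u₂ := fun h => hdy (by rw [hdy', h, sub_self])
    have hzT_mem : srgPoint dy dz ∈ SRG T Y :=
      ⟨R u₁, hmaps hu₁, R u₂, hmaps hu₂, hRne, Or.inl rfl⟩
    by_cases hdz : dz = 0
    · -- degenerate case: T (R u₁) = T (R u₂), hence z = 0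
      have hz0 : z = 0 := by
        rcases hz with rfl | rfl
        · rw [hdz, srgPoint_zero]
        · rw [hdz, srgPoint_zero, map_zero]
      have hT0 : (0 : ℂ) ∈ SRG T Y := by
        have : srgPoint dy dz = 0 := by rw [hdz, srgPoint_zero]
        exact this ▸ hzT_mem
      have h1 : z ∈ arcPlusCompletion (SRG T Y) * SRG R U := by
        have := Set.mul_mem_mul (Set.mem_biUnion hT0 (self_mem_arcPlus 0)) hzR_mem
        rwa [zero_mul, ← hz0] at this
      have h2 : z ∈ SRG T Y * arcPlusCompletion (SRG R U) := by
        have := Set.mul_mem_mul hT0 (Set.mem_biUnion hzR_mem (self_mem_arcPlus _))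
        rwa [zero_mul, ← hz0] at this
      have h3 : z ∈ arcMinusCompletion (SRG T Y) * SRG R U := by
        have := Set.mul_mem_mul (Set.mem_biUnion hT0 (self_mem_arcMinus 0)) hzR_mem
        rwa [zero_mul, ← hz0] at this
      have h4 : z ∈ SRG T Y * arcMinusCompletion (SRG R U) := by
        have := Set.mul_mem_mul hT0 (Set.mem_biUnion hzR_mem (self_mem_arcMinus _))
        rwa [zero_mul, ← hz0] at this
      exact ⟨⟨⟨h1, h2⟩, h3⟩, h4⟩
    · -- main case: all increments nonzero
      set θ₁ : ℝ := InnerProductGeometry.angle du dy with hθ₁'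
      set θ₂ : ℝ := InnerProductGeometry.angle dy dz with hθ₂'
      set θ : ℝ := InnerProductGeometry.angle du dz with hθ'
      have hθ₁0 : 0 ≤ θ₁ := InnerProductGeometry.angle_nonneg _ _
      have hθ₂0 : 0 ≤ θ₂ := InnerProductGeometry.angle_nonneg _ _
      have hθ0 : 0 ≤ θ := InnerProductGeometry.angle_nonneg _ _
      have hθ₁π : θ₁ ≤ Real.pi := InnerProductGeometry.angle_le_pi _ _
      have hθ₂π : θ₂ ≤ Real.pi := InnerProductGeometry.angle_le_pi _ _
      have hθπ : θ ≤ Real.pi := InnerProductGeometry.angle_le_pi _ _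
      have t1 : θ ≤ θ₁ + θ₂ := angle_triangle' hdu hdy hdz
      have t2 : θ₁ ≤ θ + θ₂ := by
        have := angle_triangle' hdu hdz hdy
        rwa [InnerProductGeometry.angle_comm dz dy] at this
      have t3 : θ₂ ≤ θ₁ + θ := by
        have := angle_triangle' hdy hdu hdz
        rwa [InnerProductGeometry.angle_comm dy du] at this
      have t4 : θ₁ ≤ (Real.pi - θ) + (Real.pi - θ₂) := by
        have := angle_triangle' hdu (neg_ne_zero.mpr hdz) hdy
        rwa [InnerProductGeometry.angle_neg_right du dz,
          InnerProductGeometry.angle_neg_left dz dy,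
          InnerProductGeometry.angle_comm dz dy] at this
      have hrR : 0 < ‖dy‖ / ‖du‖ := div_pos (norm_pos_iff.mpr hdy) (norm_pos_iff.mpr hdu)
      have hrT : 0 < ‖dz‖ / ‖dy‖ := div_pos (norm_pos_iff.mpr hdz) (norm_pos_iff.mpr hdy)
      have hny : ‖dy‖ ≠ 0 := norm_ne_zero_iff.mpr hdy
      have hmulr : (‖dz‖ / ‖du‖ : ℝ) = ‖dz‖ / ‖dy‖ * (‖dy‖ / ‖du‖) := by
        field_simp
      have hpi := Real.pi_pos
      -- abs and arg of the two factors
      have habsT : ‖srgPoint dy dz‖ = ‖dz‖ / ‖dy‖ := by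
        rw [srgPoint_def]; exact abs_coe_mul_exp hrT.le θ₂
      have habsR : ‖srgPoint du dy‖ = ‖dy‖ / ‖du‖ := by
        rw [srgPoint_def]; exact abs_coe_mul_exp hrR.le θ₁
      have hargT : |(srgPoint dy dz).arg| = θ₂ := by
        rw [srgPoint_def, arg_coe_mul_exp hrT (by linarith) hθ₂π, _root_.abs_of_nonneg hθ₂0]
      have hargR : |(srgPoint du dy).arg| = θ₁ := by
        rw [srgPoint_def, arg_coe_mul_exp hrR (by linarith) hθ₁π, _root_.abs_of_nonneg hθ₁0]
      have hargTn : |(-(srgPoint dy dz)).arg| = Real.pi - θ₂ := by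
        rw [srgPoint_def]; exact abs_arg_neg_coe_mul_exp hrT hθ₂0 hθ₂π
      have hargRn : |(-(srgPoint du dy)).arg| = Real.pi - θ₁ := by
        rw [srgPoint_def]; exact abs_arg_neg_coe_mul_exp hrR hθ₁0 hθ₁π
      -- the four factorizations
      have mem1 : (((‖dz‖ / ‖dy‖ : ℝ) : ℂ) * Complex.exp (Complex.I * ((θ - θ₁ : ℝ) : ℂ)))
          ∈ arcPlus (srgPoint dy dz) := by
        have := mem_arcPlus_of (srgPoint dy dz) (β := θ - θ₁)
          (by rw [hargT, abs_le]; constructor <;> linarith)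
        rwa [habsT] at this
      have fac1 : srgPoint du dz = (((‖dz‖ / ‖dy‖ : ℝ) : ℂ) * Complex.exp (Complex.I * ((θ - θ₁ : ℝ) : ℂ)))
          * srgPoint du dy := by
        rw [srgPoint_def du dz, srgPoint_def du dy]
        exact factor_eq hmulr (by ring)
      have mem2 : (((‖dy‖ / ‖du‖ : ℝ) : ℂ) * Complex.exp (Complex.I * ((θ - θ₂ : ℝ) : ℂ)))
          ∈ arcPlus (srgPoint du dy) := by
        have := mem_arcPlus_of (srgPoint du dy) (β := θ - θ₂)
          (by rw [hargR, abs_le]; constructor <;> linarith)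
        rwa [habsR] at this
      have fac2 : srgPoint du dz = srgPoint dy dz
          * (((‖dy‖ / ‖du‖ : ℝ) : ℂ) * Complex.exp (Complex.I * ((θ - θ₂ : ℝ) : ℂ))) := by
        rw [srgPoint_def du dz, srgPoint_def dy dz]
        exact factor_eq hmulr (by ring)
      have mem3 : (((‖dz‖ / ‖dy‖ : ℝ) : ℂ) * Complex.exp (Complex.I * ((θ + θ₁ : ℝ) : ℂ)))
          ∈ arcMinus (srgPoint dy dz) := by
        have := mem_arcMinus_of (srgPoint dy dz) (β := θ + θ₁)
          (by rw [hargTn, abs_le]; constructor <;> linarith)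
        rwa [habsT] at this
      have fac3 : srgPoint du dz = (((‖dz‖ / ‖dy‖ : ℝ) : ℂ) * Complex.exp (Complex.I * ((θ + θ₁ : ℝ) : ℂ)))
          * conj (srgPoint du dy) := by
        rw [srgPoint_def du dz, srgPoint_def du dy, conj_coe_mul_exp]
        exact factor_eq hmulr (by ring)
      have mem4 : (((‖dy‖ / ‖du‖ : ℝ) : ℂ) * Complex.exp (Complex.I * ((θ + θ₂ : ℝ) : ℂ)))
          ∈ arcMinus (srgPoint du dy) := by
        have := mem_arcMinus_of (srgPoint du dy) (β := θ + θ₂)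
          (by rw [hargRn, abs_le]; constructor <;> linarith)
        rwa [habsR] at this
      have fac4 : srgPoint du dz = conj (srgPoint dy dz)
          * (((‖dy‖ / ‖du‖ : ℝ) : ℂ) * Complex.exp (Complex.I * ((θ + θ₂ : ℝ) : ℂ))) := by
        rw [srgPoint_def du dz, srgPoint_def dy dz, conj_coe_mul_exp]
        exact factor_eq hmulr (by ring)
      refine ⟨⟨⟨?_, ?_⟩, ?_⟩, ?_⟩
      · exact mem_mul_of hPT hSR (by rw [← fac1]; exact hz)
          (Set.mem_biUnion hzT_mem mem1) hzR_mem
      · exact mem_mul_of hST hPR (by rw [← fac2]; exact hz)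
          hzT_mem (Set.mem_biUnion hzR_mem mem2)
      · exact mem_mul_of hMT hSR (by rw [← fac3]; exact hz)
          (Set.mem_biUnion hzT_mem mem3) (hSR _ hzR_mem)
      · exact mem_mul_of hST hMR (by rw [← fac4]; exact hz)
          (hST _ hzT_mem) (Set.mem_biUnion hzR_mem mem4)
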